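/- Let b : ℝ → ℝ be bounded, measurable and Lebesgue integrable, and define φ(x) = ∫_0^x exp(−2 ∫_0^y b(z) dz) dy. Then φ is a bijection of ℝ onto ℝ, and its inverse φ⁻¹ is Lipschitz continuous with Lipschitz constant exp(2‖b‖_{L¹}), where ‖b‖_{L¹} = ∫_ℝ |b(z)| dz. -/
import Mathlib


open MeasureTheory intervalIntegral

noncomputable section

/-- `φ'(x) = exp(−2 ∫_0^x b(z) dz)`. -/
def phi' (b : ℝ → ℝ) (x : ℝ) : ℝ := Real.exp (-2 * ∫ z in (0:ℝ)..x, b z)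

/-- `φ(x) = ∫_0^x exp(−2 ∫_0^y b(z) dz) dy`. -/
def phi (b : ℝ → ℝ) (x : ℝ) : ℝ := ∫ y in (0:ℝ)..x, phi' b y

lemma abs_intervalIntegral_le (b : ℝ → ℝ) (hint : Integrable b (volume : Measure ℝ))
    (x : ℝ) : |∫ z in (0:ℝ)..x, b z| ≤ ∫ z, |b z| := by
  have habs : Integrable (fun z => |b z|) (volume : Measure ℝ) := hint.abs
  have hnn : 0 ≤ᵐ[volume] fun z => |b z| := Filter.Eventually.of_forall fun z => abs_nonneg _
  rcases le_total 0 x with hx | hx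
  · calc |∫ z in (0:ℝ)..x, b z| ≤ ∫ z in (0:ℝ)..x, |b z| :=
          intervalIntegral.abs_integral_le_integral_abs hx
    _ = ∫ z in Set.Ioc (0:ℝ) x, |b z| := intervalIntegral.integral_of_le hx
    _ ≤ ∫ z, |b z| := setIntegral_le_integral habs hnn
  · rw [intervalIntegral.integral_symm, abs_neg]
    calc |∫ z in x..(0:ℝ), b z| ≤ ∫ z in x..(0:ℝ), |b z| :=
          intervalIntegral.abs_integral_le_integral_abs hx
    _ = ∫ z in Set.Ioc x (0:ℝ), |b z| := intervalIntegral.integral_of_le hx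
    _ ≤ ∫ z, |b z| := setIntegral_le_integral habs hnn

/-- If `b : ℝ → ℝ` is bounded, measurable and Lebesgue integrable, then
`φ` is a bijection of `ℝ` onto `ℝ`, and its inverse `φ⁻¹` is Lipschitz continuous with
Lipschitz constant `exp(2‖b‖_{L¹})`. -/
theorem statement2 (b : ℝ → ℝ) (hmeas : Measurable b)
    (hint : Integrable b (volume : Measure ℝ))
    (hbd : ∃ C : ℝ, ∀ x, |b x| ≤ C) :
    Function.Bijective (phi b) ∧
    ∀ u v : ℝ,
      |Function.invFun (phi b) u - Function.invFun (phi b) v|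
        ≤ Real.exp (2 * ∫ z, |b z|) * |u - v| := by
  set I : ℝ := ∫ z, |b z| with hI
  set c : ℝ := Real.exp (-(2 * I)) with hc
  have hcpos : 0 < c := Real.exp_pos _
  -- lower bound on phi'
  have hlow : ∀ x, c ≤ phi' b x := by
    intro x
    have h1 : |∫ z in (0:ℝ)..x, b z| ≤ I := abs_intervalIntegral_le b hint x
    have : -(2 * I) ≤ -2 * ∫ z in (0:ℝ)..x, b z := by
      have := (abs_le.mp h1).2
      nlinarith [(abs_le.mp h1).1]
    exact Real.exp_le_exp.mpr this
  -- continuity of phi'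
  have hcont' : Continuous (phi' b) := by
    have : Continuous fun x => ∫ z in (0:ℝ)..x, b z :=
      intervalIntegral.continuous_primitive (fun a b' => hint.intervalIntegrable) 0
    exact Real.continuous_exp.comp (continuous_const.mul this)
  have hii : ∀ a b' : ℝ, IntervalIntegrable (phi' b) volume a b' := fun a b' =>
    hcont'.intervalIntegrable a b'
  have hcontphi : Continuous (phi b) :=
    intervalIntegral.continuous_primitive hii 0
  -- key growth estimate
  have hkey : ∀ x y : ℝ, x ≤ y → c * (y - x) ≤ phi b y - phi b x := by
    intro x y hxy
    have hsub : phi b y - phi b x = ∫ z in x..y, phi' b z := by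
      unfold phi
      exact intervalIntegral.integral_interval_sub_left (hii 0 y) (hii 0 x)
    rw [hsub]
    have : ∫ z in x..y, c ≤ ∫ z in x..y, phi' b z := by
      apply intervalIntegral.integral_mono_on hxy (intervalIntegrable_const) (hii x y)
      intro z _; exact hlow z
    simpa [intervalIntegral.integral_const, smul_eq_mul, mul_comm] using this
  have hmono : StrictMono (phi b) := by
    intro x y hxy
    have := hkey x y hxy.le
    nlinarith [hcpos]
  -- surjectivity
  have hsurj : Function.Surjective (phi b) := by
    have h0 : phi b 0 = 0 := by simp [phi]
    apply Continuous.surjective hcontphi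
    · apply Filter.tendsto_atTop_mono' _ _ (Filter.tendsto_atTop_atTop_of_monotone
        (fun x y hxy => mul_le_mul_of_nonneg_left hxy hcpos.le : Monotone fun x => c * x)
        (fun z => ⟨z / c, by rw [mul_div_cancel₀]; exact hcpos.ne'⟩))
      filter_upwards [Filter.eventually_ge_atTop 0] with x hx
      have := hkey 0 x hx
      simp only [h0] at this
      linarith
    · apply Filter.tendsto_atBot_mono' _ _ (Filter.tendsto_atBot_atBot_of_monotone
        (fun x y hxy => mul_le_mul_of_nonneg_left hxy hcpos.le : Monotone fun x => c * x)
        (fun z => ⟨z / c, by rw [mul_div_cancel₀]; exact hcpos.ne'⟩))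
      filter_upwards [Filter.eventually_le_atBot 0] with x hx
      have := hkey x 0 hx
      simp only [h0] at this
      linarith
  have hbij : Function.Bijective (phi b) := ⟨hmono.injective, hsurj⟩
  refine ⟨hbij, fun u v => ?_⟩
  have hrinv := Function.rightInverse_invFun hsurj
  set x := Function.invFun (phi b) u with hx
  set y := Function.invFun (phi b) v with hy
  have hxu : phi b x = u := hrinv u
  have hyv : phi b y = v := hrinv v
  have hcinv : Real.exp (2 * I) = c⁻¹ := by
    rw [hc, ← Real.exp_neg, neg_neg]
  rw [hcinv]
  have hgen : ∀ p q : ℝ, p ≤ q → c * (q - p) ≤ |phi b q - phi b p| := by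
    intro p q hpq
    have := hkey p q hpq
    exact this.trans (le_abs_self _)
  have hmain : c * |x - y| ≤ |u - v| := by
    rcases le_total x y with h | h
    · have := hgen x y h
      rw [hxu, hyv] at this
      rw [abs_sub_comm x y, abs_of_nonneg (by linarith : (0:ℝ) ≤ y - x),
        abs_sub_comm u v]
      exact this
    · have := hgen y x h
      rw [hxu, hyv] at this
      rw [abs_of_nonneg (by linarith : (0:ℝ) ≤ x - y)]
      exact this
  rw [inv_mul_eq_div, le_div_iff₀ hcpos, mul_comm]
  exact hmain

end
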